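/- arXiv:2001.08417 — 2 statements merged into one kernel-verified Lean document; each statement's English description precedes it below -/
import Mathlib

section
/- Let π ∈ S_n and assume v_i ≤ v_q with i ≤ q, that Prec_π(v_i) is not a pinnacle of π, and that y_0 ≠ Prec_π(v_i) < y_q. Then there exist two balanced reversals transforming π into a permutation π'' such that the only differences between π and π'' are: (i) if Prec_π(v_i) > v_q, then Prec_π(v_i) is moved immediately after cutA_π(Prec_π(v_i), v_q, y_q), so that Prec_π(v_i) ∈ A_{π''}(v_q, y_q); (ii) if Prec_π(v_i) < v_q, then Prec_π(v_i) is moved immediately after v_q and becomes the dell v''_q of π''. -/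
/-- The block reversal: reverses the block of `π` between positions `a` and `b`. -/
def rev (π : ℕ → ℕ) (a b : ℕ) : ℕ → ℕ := fun i =>
  if a ≤ i ∧ i ≤ b then π (a + b - i) else π i

/-- Position `i` holds a pinnacle: `π (i-1) < π i > π (i+1)`. -/
def PinAt (π : ℕ → ℕ) (i : ℕ) : Prop := π (i - 1) < π i ∧ π (i + 1) < π i

/-- Position `i` holds a dell: `π (i-1) > π i < π (i+1)`. -/
def DellAt (π : ℕ → ℕ) (i : ℕ) : Prop := π i < π (i - 1) ∧ π i < π (i + 1)

/-- Position `i` is ascending: its element belongs to an ascending set of `π`. -/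
def AscAt (π : ℕ → ℕ) (i : ℕ) : Prop := π (i - 1) < π i ∧ π i < π (i + 1)

/-- Position `i` is descending: its element belongs to a descending set of `π`. -/
def DescAt (π : ℕ → ℕ) (i : ℕ) : Prop := π i < π (i - 1) ∧ π (i + 1) < π i

/-- The pinnacle set of `π ∈ S_n`, as a finset of values. -/
def pinFinset (n : ℕ) (π : ℕ → ℕ) : Finset ℕ :=
  ((Finset.Icc 1 n).filter fun i => π (i - 1) < π i ∧ π (i + 1) < π i).image π

/-- The reversal with endpoints at positions `a ≤ b` is balanced for `π`:
it does not modify the pinnacle set. -/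
def BalancedRev (n : ℕ) (π : ℕ → ℕ) (a b : ℕ) : Prop :=
  pinFinset n (rev π a b) = pinFinset n π

/-- Apply a sequence of reversals (each given by its pair of positions). -/
def applySeq (π : ℕ → ℕ) : List (ℕ × ℕ) → ℕ → ℕ
  | [] => π
  | ab :: L => applySeq (rev π ab.1 ab.2) L

/-- Every reversal of the sequence is balanced for the permutation to which
it is applied. -/
def IsBalancedSeq (n : ℕ) (π : ℕ → ℕ) : List (ℕ × ℕ) → Prop
  | [] => True
  | ab :: L => 1 ≤ ab.1 ∧ ab.1 ≤ ab.2 ∧ ab.2 ≤ n ∧ BalancedRev n π ab.1 ab.2 ∧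
      IsBalancedSeq n (rev π ab.1 ab.2) L

/-- `π` is the extension of a permutation of `{1,…,n}` by the boundary values
`π 0 = n+1` and `π (n+1) = n+2`. -/
def IsExtPerm (n : ℕ) (π : ℕ → ℕ) : Prop :=
  Set.BijOn π (Set.Icc 1 n) (Set.Icc 1 n) ∧ π 0 = n + 1 ∧ π (n + 1) = n + 2

/-- The positions of the pinnacles of `π`, from left to right. -/
def pinPosList (n : ℕ) (π : ℕ → ℕ) : List ℕ :=
  ((Finset.Icc 1 n).filter fun i => π (i - 1) < π i ∧ π (i + 1) < π i).sort (· ≤ ·)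

/-- The positions of the dells of `π`, from left to right. -/
def dellPosList (n : ℕ) (π : ℕ → ℕ) : List ℕ :=
  ((Finset.Icc 1 n).filter fun i => π i < π (i - 1) ∧ π i < π (i + 1)).sort (· ≤ ·)

/-- The pinnacles `y_1, …, y_p` of `π`, from left to right. -/
def pinList (n : ℕ) (π : ℕ → ℕ) : List ℕ := (pinPosList n π).map π

/-- The dells `v_1, …, v_{p+1}` of `π`, from left to right. -/
def dellList (n : ℕ) (π : ℕ → ℕ) : List ℕ := (dellPosList n π).map π

/-- The position of the dell `v q` (dells are indexed from `1`). -/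
def vPos (n : ℕ) (π : ℕ → ℕ) (q : ℕ) : ℕ := (dellPosList n π).getD (q - 1) 0

/-- The dell `v q`. -/
def vVal (n : ℕ) (π : ℕ → ℕ) (q : ℕ) : ℕ := π (vPos n π q)

/-- The position of the pinnacle `y q`, where `y 0` is at position `0` and
`y (p+1)` is at position `n+1`. -/
def yPos (n : ℕ) (π : ℕ → ℕ) (q : ℕ) : ℕ :=
  if q = 0 then 0 else (pinPosList n π).getD (q - 1) (n + 1)

/-- The pinnacle `y q`, where `y 0 = π 0 = n+1` and `y (p+1) = π (n+1) = n+2`. -/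
def yVal (n : ℕ) (π : ℕ → ℕ) (q : ℕ) : ℕ := π (yPos n π q)

/-- The elements of `π` at positions `1, …, n`, read from left to right. -/
def toList (n : ℕ) (π : ℕ → ℕ) : List ℕ := (List.range n).map fun i => π (i + 1)

/-- The cutpoint `cutA_π(z, v_q, y_q)`: the largest element `e` of
`A_π(v_q, y_q) ∪ {v_q}` such that `e < z`. -/
noncomputable def cutA (n : ℕ) (π : ℕ → ℕ) (q z : ℕ) : ℕ :=
  sSup ((insert (vVal n π q) (π '' Set.Ioo (vPos n π q) (yPos n π q))) ∩ Set.Iio z)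

/-- The cutpoint `cutD_π(z, y_{q-1}, v_q)`: the largest element `e` of
`D_π(y_{q-1}, v_q) ∪ {v_q}` such that `e < z`. -/
noncomputable def cutD (n : ℕ) (π : ℕ → ℕ) (q z : ℕ) : ℕ :=
  sSup ((insert (vVal n π q) (π '' Set.Ioo (yPos n π (q - 1)) (vPos n π q))) ∩ Set.Iio z)

/-- The canonical permutation `Id_S ∈ S_n` (extended by its boundary values):
the elements of `S` in increasing order at positions `2, 4, …, 2|S|`, and the
elements of `{1,…,n} \ S` in increasing order at the remaining positions. -/
def canon (n : ℕ) (S : Finset ℕ) : ℕ → ℕ := fun i =>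
  if i = 0 then n + 1
  else if i = n + 1 then n + 2
  else if i ≤ 2 * S.card ∧ i % 2 = 0 then (S.sort (· ≤ ·)).getD (i / 2 - 1) 0
  else if i ≤ 2 * S.card then (((Finset.Icc 1 n) \ S).sort (· ≤ ·)).getD ((i - 1) / 2) 0
  else (((Finset.Icc 1 n) \ S).sort (· ≤ ·)).getD (i - S.card - 1) 0



lemma sorted_getD_eq {l : List ℕ} (hl : l.Pairwise (· < ·)) {x : ℕ} (hx : x ∈ l) :
    l.getD (l.filter (fun y => y < x)).length 0 = x := by
  induction l with
  | nil => simp at hx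
  | cons a l ih =>
    by_cases hax : a = x
    · subst hax
      have hf : (a :: l).filter (fun y => y < a) = [] := by
        rw [List.filter_eq_nil_iff]
        intro y hy
        rcases List.mem_cons.1 hy with h | hy'
        · simp [h]
        · simpa using not_lt.2 (le_of_lt (List.rel_of_pairwise_cons hl hy'))
      simp [hf]
    · have hx' : x ∈ l := by rcases List.mem_cons.1 hx with h | h; exact absurd h.symm hax; exact h
      have hax2 : a < x := List.rel_of_pairwise_cons hl hx'
      have hf : (a :: l).filter (fun y => y < x) = a :: l.filter (fun y => y < x) := by
        simp [List.filter_cons, hax2]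
      rw [hf]
      simpa using ih hl.of_cons hx'

lemma sorted_filter_lt_length {l : List ℕ} {x : ℕ} (hx : x ∈ l) :
    (l.filter (fun y => y < x)).length < l.length := by
  have hx2 : x ∉ l.filter (fun y => y < x) := by simp
  have := List.length_filter_le (fun y => decide (y < x)) l
  rcases eq_or_lt_of_le this with h | h
  · exfalso
    have := (List.length_filter_eq_length_iff (p := fun y => decide (y < x)) (l := l)).1 h x hx
    simp at this
  · exact h

lemma sorted_getD_mono {l : List ℕ} (hl : l.Pairwise (· < ·)) {k₁ k₂ : ℕ}
    (h : k₁ ≤ k₂) (h₂ : k₂ < l.length) : l.getD k₁ 0 ≤ l.getD k₂ 0 := by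
  rcases eq_or_lt_of_le h with rfl | hlt
  · exact le_refl _
  · have := List.pairwise_iff_get.1 hl ⟨k₁, lt_trans hlt h₂⟩ ⟨k₂, h₂⟩ hlt
    rw [List.getD_eq_getElem _ _ (lt_trans hlt h₂), List.getD_eq_getElem _ _ h₂]
    exact le_of_lt this

lemma getD_mem {l : List ℕ} {k : ℕ} (h : k < l.length) : l.getD k 0 ∈ l := by
  rw [List.getD_eq_getElem _ _ h]; exact List.getElem_mem _

/-- converse: if `x` is at index `k` of a strictly sorted list then exactly `k` elements are `< x`. -/
lemma sorted_filter_of_getD {l : List ℕ} (hl : l.Pairwise (· < ·)) {k : ℕ} (hk : k < l.length) :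
    (l.filter (fun y => y < l.getD k 0)).length = k := by
  set x := l.getD k 0 with hx
  have hxl : x ∈ l := getD_mem hk
  have h1 : l.getD (l.filter (fun y => y < x)).length 0 = x := sorted_getD_eq hl hxl
  have h2 : (l.filter (fun y => y < x)).length < l.length := sorted_filter_lt_length hxl
  by_contra hne
  rcases lt_or_gt_of_ne hne with h | h
  · have := List.pairwise_iff_get.1 hl ⟨_, h2⟩ ⟨k, hk⟩ h
    simp only [List.get_eq_getElem, ← List.getD_eq_getElem _ 0] at this
    rw [h1, ← hx] at this; exact lt_irrefl _ this
  · have := List.pairwise_iff_get.1 hl ⟨k, hk⟩ ⟨_, h2⟩ h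
    simp only [List.get_eq_getElem, ← List.getD_eq_getElem _ 0] at this
    rw [h1, ← hx] at this; exact lt_irrefl _ this
section M2
variable (n : ℕ) (π : ℕ → ℕ)

lemma rev_in {a b j : ℕ} (h1 : a ≤ j) (h2 : j ≤ b) : rev π a b j = π (a + b - j) := by
  simp [rev, h1, h2]

lemma rev_out {a b j : ℕ} (h : j < a ∨ b < j) : rev π a b j = π j := by
  unfold rev; split
  · omega
  · rfl

lemma rev_self (a : ℕ) : rev π a a = π := by
  funext j
  unfold rev; split
  · next h => rw [show a + a - j = j by omega]
  · rfl

/-- Main balancedness criterion for a reversal. -/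
lemma revBalanced
    {a b : ℕ} (ha : 1 ≤ a) (hab : a ≤ b) (hb : b ≤ n)
    (H1 : π a < π (a-1)) (H2 : π a < π (b+1)) (H3 : π b < π (b+1))
    (H4 : π b < π (a-1) ∨ π b < π (b-1))
    (H5 : π b < π (a-1) ∨ a = 1 ∨ π (a-1) < π (a-2)) :
    BalancedRev n π a b := by
  unfold BalancedRev
  rcases eq_or_lt_of_le hab with rfl | hab'
  · rw [rev_self]
  set ι : ℕ → ℕ := fun j => if a ≤ j ∧ j ≤ b then a + b - j else j with hι
  have hval : ∀ j, rev π a b j = π (ι j) := by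
    intro j; by_cases h : a ≤ j ∧ j ≤ b
    · rw [hι]; simp only [h, and_self, if_true]; exact rev_in π h.1 h.2
    · rw [hι]; simp only [h, if_false]; exact rev_out π (by omega)
  have hιmem : ∀ j, 1 ≤ j → j ≤ n → 1 ≤ ι j ∧ ι j ≤ n := by
    intro j h1 h2; rw [hι]; dsimp only; split <;> omega
  have hinv : ∀ j, ι (ι j) = j := by
    intro j; rw [hι]; dsimp only; split_ifs <;> omega
  have key : ∀ j, 1 ≤ j → j ≤ n → (PinAt (rev π a b) j ↔ PinAt π (ι j)) := by
    intro j h1 h2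
    unfold PinAt
    rcases lt_trichotomy j a with hja | hja | hja
    · rcases eq_or_lt_of_le (by omega : j + 1 ≤ a) with hj1 | hj1
      · -- j = a - 1
        have e0 : rev π a b (j-1) = π (j-1) := rev_out π (by omega)
        have e1 : rev π a b j = π j := rev_out π (by omega)
        have e2 : rev π a b (j+1) = π b := by
          rw [rev_in π (by omega) (by omega)]; congr 1 <;> omega
        rw [e0, e1, e2, hι]
        have hnot : ¬ (a ≤ j ∧ j ≤ b) := by omega
        simp only [hnot, if_false]
        have q1 : π j = π (a-1) := by rw [show j = a - 1 by omega]
        have q2 : π (j-1) = π (a-2) := by rw [show j - 1 = a - 2 by omega]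
        have q3 : π (j+1) = π a := by rw [show j + 1 = a by omega]
        rcases H5 with h5 | h5 | h5 <;> omega
      · -- j + 1 < a : all unchanged
        have e0 : rev π a b (j-1) = π (j-1) := rev_out π (by omega)
        have e1 : rev π a b j = π j := rev_out π (by omega)
        have e2 : rev π a b (j+1) = π (j+1) := rev_out π (by omega)
        rw [e0, e1, e2, hι]
        have hnot : ¬ (a ≤ j ∧ j ≤ b) := by omega
        simp [hnot]
    · -- j = a
      have e0 : rev π a b (j-1) = π (j-1) := rev_out π (by omega)
      have e1 : rev π a b j = π b := by
        rw [rev_in π (by omega) (by omega)]; congr 1 <;> omega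
      have e2 : rev π a b (j+1) = π (b-1) := by
        rw [rev_in π (by omega) (by omega)]; congr 1 <;> omega
      rw [e0, e1, e2, hι]
      have hyes : (a ≤ j ∧ j ≤ b) := by omega
      simp only [hyes, and_self, if_true]
      rw [show a + b - j = b by omega]
      have q1 : π (j-1) = π (a-1) := by rw [show j - 1 = a - 1 by omega]
      omega
    · rcases lt_trichotomy j b with hjb | hjb | hjb
      · -- a < j < b
        have e0 : rev π a b (j-1) = π (a+b-j+1) := by
          rw [rev_in π (by omega) (by omega)]; congr 1 <;> omega
        have e1 : rev π a b j = π (a+b-j) := rev_in π (by omega) (by omega)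
        have e2 : rev π a b (j+1) = π (a+b-j-1) := by
          rw [rev_in π (by omega) (by omega)]; congr 1 <;> omega
        rw [e0, e1, e2, hι]
        have hyes : (a ≤ j ∧ j ≤ b) := by omega
        simp only [hyes, and_self, if_true]
        rw [show a + b - j + 1 = (a+b-j) + 1 by omega]
        exact and_comm
      · -- j = b
        have e0 : rev π a b (j-1) = π (a+1) := by
          rw [rev_in π (by omega) (by omega)]; congr 1 <;> omega
        have e1 : rev π a b j = π a := by
          rw [rev_in π (by omega) (by omega)]; congr 1 <;> omega
        have e2 : rev π a b (j+1) = π (j+1) := rev_out π (by omega)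
        rw [e0, e1, e2, hι]
        have hyes : (a ≤ j ∧ j ≤ b) := by omega
        simp only [hyes, and_self, if_true]
        rw [show a + b - j = a by omega]
        have q1 : π (j+1) = π (b+1) := by rw [show j + 1 = b + 1 by omega]
        omega
      · -- j > b
        have e1 : rev π a b j = π j := rev_out π (by omega)
        have e2 : rev π a b (j+1) = π (j+1) := rev_out π (by omega)
        rcases eq_or_lt_of_le (by omega : b + 1 ≤ j) with hj1 | hj1
        · -- j = b+1
          have e0 : rev π a b (j-1) = π a := by
            rw [show j - 1 = b by omega, rev_in π hab (le_refl b)]; congr 1 <;> omega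
          rw [e0, e1, e2, hι]
          have hnot : ¬ (a ≤ j ∧ j ≤ b) := by omega
          simp only [hnot, if_false]
          have q1 : π (j-1) = π b := by rw [show j - 1 = b by omega]
          have q2 : π (j+1) = π (b+1+1) := by rw [show j + 1 = b + 1 + 1 by omega]
          have q3 : π j = π (b+1) := by rw [show j = b + 1 by omega]
          omega
        · have e0 : rev π a b (j-1) = π (j-1) := rev_out π (by omega)
          rw [e0, e1, e2, hι]
          have hnot : ¬ (a ≤ j ∧ j ≤ b) := by omega
          simp [hnot]
  unfold pinFinset
  ext x
  simp only [Finset.mem_image, Finset.mem_filter, Finset.mem_Icc]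
  constructor
  · rintro ⟨j, ⟨⟨hj1, hj2⟩, hpin⟩, hx⟩
    refine ⟨ι j, ⟨⟨(hιmem j hj1 hj2).1, (hιmem j hj1 hj2).2⟩, ?_⟩, ?_⟩
    · exact (key j hj1 hj2).1 hpin
    · rw [← hval j]; exact hx
  · rintro ⟨j, ⟨⟨hj1, hj2⟩, hpin⟩, hx⟩
    refine ⟨ι j, ⟨⟨(hιmem j hj1 hj2).1, (hιmem j hj1 hj2).2⟩, ?_⟩, ?_⟩
    · exact (key (ι j) (hιmem j hj1 hj2).1 (hιmem j hj1 hj2).2).2 (by rw [hinv j]; exact hpin)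
    · rw [hval (ι j), hinv j]; exact hx

end M2
section M3
variable {n : ℕ} {π : ℕ → ℕ}

lemma extPerm_val (h : IsExtPerm n π) {j : ℕ} (h1 : 1 ≤ j) (h2 : j ≤ n) :
    1 ≤ π j ∧ π j ≤ n := by
  have := h.1.mapsTo (Set.mem_Icc.2 ⟨h1, h2⟩); exact Set.mem_Icc.1 this

lemma extPerm_inj (h : IsExtPerm n π) :
    ∀ x y, x ≤ n+1 → y ≤ n+1 → π x = π y → x = y := by
  have val : ∀ z, z ≤ n+1 → (z = 0 ∧ π z = n+1) ∨ (z = n+1 ∧ π z = n+2) ∨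
      (1 ≤ z ∧ z ≤ n ∧ 1 ≤ π z ∧ π z ≤ n) := by
    intro z hz
    rcases (by omega : z = 0 ∨ z = n+1 ∨ (1 ≤ z ∧ z ≤ n)) with rfl | rfl | hz'
    · exact Or.inl ⟨rfl, h.2.1⟩
    · exact Or.inr (Or.inl ⟨rfl, h.2.2⟩)
    · exact Or.inr (Or.inr ⟨hz'.1, hz'.2, (extPerm_val h hz'.1 hz'.2).1, (extPerm_val h hz'.1 hz'.2).2⟩)
  intro x y hx hy hxy
  rcases val x hx with ⟨e1, e2⟩ | ⟨e1, e2⟩ | ⟨e1, e2, e3, e4⟩ <;>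
    rcases val y hy with ⟨f1, f2⟩ | ⟨f1, f2⟩ | ⟨f1, f2, f3, f4⟩ <;>
      try omega
  exact h.1.injOn (Set.mem_Icc.2 ⟨e1, e2⟩) (Set.mem_Icc.2 ⟨f1, f2⟩) hxy

lemma mem_dellPosList {j : ℕ} :
    j ∈ dellPosList n π ↔ (1 ≤ j ∧ j ≤ n) ∧ (π j < π (j-1) ∧ π j < π (j+1)) := by
  unfold dellPosList
  rw [Finset.mem_sort, Finset.mem_filter, Finset.mem_Icc]

lemma mem_pinPosList {j : ℕ} :
    j ∈ pinPosList n π ↔ (1 ≤ j ∧ j ≤ n) ∧ (π (j-1) < π j ∧ π (j+1) < π j) := by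
  unfold pinPosList
  rw [Finset.mem_sort, Finset.mem_filter, Finset.mem_Icc]

lemma dell_sorted (n : ℕ) (π : ℕ → ℕ) : (dellPosList n π).Pairwise (· < ·) :=
  (Finset.sortedLT_sort _).pairwise

lemma pin_sorted (n : ℕ) (π : ℕ → ℕ) : (pinPosList n π).Pairwise (· < ·) :=
  (Finset.sortedLT_sort _).pairwise

lemma card_filter_lt_eq (S : Finset ℕ) (x : ℕ) :
    (S.filter (fun y => y < x)).card = ((S.sort (· ≤ ·)).filter (fun y => y < x)).length := by
  have h1 : ((S.sort (· ≤ ·) : List ℕ) : Multiset ℕ) = S.val := Finset.sort_eq _ _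
  have h2 : (S.filter (fun y => y < x)).val = S.val.filter (fun y => y < x) :=
    Finset.filter_val _ _
  have : (S.filter (fun y => y < x)).card = Multiset.card (S.val.filter (fun y => y < x)) := by
    rw [Finset.card, h2]
  rw [this, ← h1, Multiset.filter_coe, Multiset.coe_card]

end M3
section M4
variable {n : ℕ} {π : ℕ → ℕ}

/-- counting rises vs falls up to position `j`. -/
lemma count_rf (hn : 1 ≤ n) (hext : IsExtPerm n π) :
    ∀ j, j ≤ n →
    ((Finset.Icc 1 j).filter (fun i => π i < π (i-1) ∧ π i < π (i+1))).card
      = ((Finset.Icc 1 j).filter (fun i => π (i-1) < π i ∧ π (i+1) < π i)).card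
        + (if π j < π (j+1) then 1 else 0) := by
  have inj := extPerm_inj hext
  intro j
  induction j with
  | zero =>
    intro _
    have h1 : π 1 ≤ n := (extPerm_val hext (le_refl 1) hn).2
    have h0 : π 0 = n + 1 := hext.2.1
    rw [show Finset.Icc 1 0 = ∅ by rfl]
    simp only [Finset.filter_empty, Finset.card_empty, Nat.zero_add]
    rw [if_neg (by omega)]
  | succ j ih =>
    intro hj
    have ih' := ih (by omega)
    have hIcc : Finset.Icc 1 (j+1) = insert (j+1) (Finset.Icc 1 j) := by
      ext t; simp only [Finset.mem_Icc, Finset.mem_insert]; omega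
    have hnm : (j+1) ∉ Finset.Icc 1 j := by simp
    have ne1 : π j ≠ π (j+1) := fun h => by have := inj j (j+1) (by omega) (by omega) h; omega
    have ne2 : π (j+1) ≠ π (j+1+1) := fun h => by
      have := inj (j+1) (j+1+1) (by omega) (by omega) h; omega
    rw [hIcc, Finset.filter_insert, Finset.filter_insert]
    have harith : j + 1 - 1 = j := by omega
    by_cases A : π j < π (j+1) <;> by_cases B : π (j+1) < π (j+1+1)
    · rw [if_neg (by rw [harith]; omega), if_neg (by rw [harith]; omega), if_pos B]
      rw [if_pos A] at ih'; omega
    · rw [if_neg (by rw [harith]; omega), if_pos (by rw [harith]; exact ⟨A, by omega⟩),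
        Finset.card_insert_of_notMem (fun hm => hnm (Finset.filter_subset _ _ hm)), if_neg B]
      rw [if_pos A] at ih'; omega
    · rw [if_pos (by rw [harith]; exact ⟨by omega, B⟩), if_neg (by rw [harith]; omega),
        Finset.card_insert_of_notMem (fun hm => hnm (Finset.filter_subset _ _ hm)), if_pos B]
      rw [if_neg A] at ih'; omega
    · rw [if_neg (by rw [harith]; omega), if_neg (by rw [harith]; omega), if_neg B]
      rw [if_neg A] at ih'; omega

/-- there are exactly `q-1` dells strictly before the `q`-th dell, and `q-1` falls
up to the `q`-th dell position. -/
lemma falls_before_dell (hn : 1 ≤ n) (hext : IsExtPerm n π) {q : ℕ}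
    (hq1 : 1 ≤ q) (hq : q ≤ (dellPosList n π).length) :
    ((Finset.Icc 1 (vPos n π q)).filter (fun i => π (i-1) < π i ∧ π (i+1) < π i)).card = q - 1 := by
  set pq := vPos n π q with hpq
  have hmem : pq ∈ dellPosList n π := getD_mem (by omega)
  have hdell := mem_dellPosList.1 hmem
  set S : Finset ℕ := (Finset.Icc 1 n).filter (fun i => π i < π (i-1) ∧ π i < π (i+1)) with hS
  have hcnt : ((dellPosList n π).filter (fun y => y < pq)).length = q - 1 := by
    have := sorted_filter_of_getD (dell_sorted n π) (l := dellPosList n π) (k := q-1) (by omega)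
    rw [← this]; rfl
  have hfin : (S.filter (fun y => y < pq)).card = q - 1 := by
    rw [card_filter_lt_eq]; exact hcnt
  -- dells ≤ pq, as filter over Icc 1 pq
  have hRc : ((Finset.Icc 1 pq).filter (fun i => π i < π (i-1) ∧ π i < π (i+1))).card = q := by
    have hset : (Finset.Icc 1 pq).filter (fun i => π i < π (i-1) ∧ π i < π (i+1))
        = insert pq (S.filter (fun y => y < pq)) := by
      ext t
      simp only [Finset.mem_filter, Finset.mem_Icc, Finset.mem_insert, hS]
      constructor
      · rintro ⟨⟨ht1, ht2⟩, hd⟩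
        rcases eq_or_lt_of_le ht2 with rfl | ht2'
        · exact Or.inl rfl
        · exact Or.inr ⟨⟨⟨ht1, by omega⟩, hd⟩, ht2'⟩
      · rintro (rfl | ⟨⟨⟨ht1, ht2⟩, hd⟩, hlt⟩)
        · exact ⟨⟨hdell.1.1, le_refl _⟩, hdell.2⟩
        · exact ⟨⟨ht1, by omega⟩, hd⟩
    rw [hset, Finset.card_insert_of_notMem (by simp [hS]), hfin]
    omega
  have := count_rf hn hext pq hdell.1.2
  rw [hRc, if_pos hdell.2.2] at this
  omega

/-- no fall (pinnacle) strictly between the `q`-th dell and `yPos q`. -/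
lemma no_fall_in_run (hn : 1 ≤ n) (hext : IsExtPerm n π) {q : ℕ}
    (hq1 : 1 ≤ q) (hq : q ≤ (dellPosList n π).length) :
    ∀ f, vPos n π q < f → f < yPos n π q → ¬ (π (f-1) < π f ∧ π (f+1) < π f) := by
  set pq := vPos n π q with hpq
  intro f hf1 hf2 hpin
  have hyle : yPos n π q ≤ n + 1 := by
    unfold yPos
    rw [if_neg (by omega)]
    by_cases h : q - 1 < (pinPosList n π).length
    · have := mem_pinPosList.1 (getD_mem (l := pinPosList n π) h)
      rw [List.getD_eq_getElem _ (n+1) h, ← List.getD_eq_getElem _ 0 h]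
      omega
    · rw [List.getD_eq_default _ _ (by omega)]
  have hfn : f ≤ n := by omega
  have hmemf : f ∈ pinPosList n π := mem_pinPosList.2 ⟨⟨by omega, hfn⟩, hpin⟩
  set T : Finset ℕ := (Finset.Icc 1 n).filter (fun i => π (i-1) < π i ∧ π (i+1) < π i) with hT
  set k := ((pinPosList n π).filter (fun y => y < f)).length with hk
  have hklen : k < (pinPosList n π).length := sorted_filter_lt_length hmemf
  have hgetk : (pinPosList n π).getD k 0 = f := sorted_getD_eq (pin_sorted n π) hmemf
  -- k ≥ q - 1
  have hcard : (T.filter (fun y => y < f)).card = k := by rw [card_filter_lt_eq]; rfl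
  have hsub : ((Finset.Icc 1 pq).filter (fun i => π (i-1) < π i ∧ π (i+1) < π i))
      ⊆ T.filter (fun y => y < f) := by
    intro t ht
    simp only [Finset.mem_filter, Finset.mem_Icc, hT] at ht ⊢
    exact ⟨⟨⟨ht.1.1, by omega⟩, ht.2⟩, by omega⟩
  have hkge : q - 1 ≤ k := by
    have := Finset.card_le_card hsub
    rw [hcard, falls_before_dell hn hext hq1 hq] at this
    exact this
  -- hence yPos q ≤ f
  have hylef : yPos n π q ≤ f := by
    unfold yPos
    rw [if_neg (by omega)]
    have hq1len : q - 1 < (pinPosList n π).length := by omega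
    rw [List.getD_eq_getElem _ (n+1) hq1len, ← List.getD_eq_getElem _ 0 hq1len, ← hgetk]
    exact sorted_getD_mono (pin_sorted n π) (by omega) hklen
  omega

/-- the stretch from the `q`-th dell to `yPos q` is ascending. -/
lemma run_asc (hn : 1 ≤ n) (hext : IsExtPerm n π) {q : ℕ}
    (hq1 : 1 ≤ q) (hq : q ≤ (dellPosList n π).length) :
    ∀ j, vPos n π q ≤ j → j < yPos n π q → π j < π (j+1) := by
  set pq := vPos n π q with hpq
  have hmemq : pq ∈ dellPosList n π := getD_mem (by omega)
  have hdell := mem_dellPosList.1 hmemq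
  have key : ∀ d, pq + d < yPos n π q → π (pq + d) < π (pq + d + 1) := by
    intro d
    induction d with
    | zero => intro _; simpa using hdell.2.2
    | succ d ih =>
      intro hd
      by_contra hcon
      have hcon' : ¬ π (pq + d + 1) < π (pq + d + 1 + 1) := hcon
      have hyle : yPos n π q ≤ n + 1 := by
        unfold yPos
        rw [if_neg (by omega)]
        by_cases h : q - 1 < (pinPosList n π).length
        · have := mem_pinPosList.1 (getD_mem (l := pinPosList n π) h)
          rw [List.getD_eq_getElem _ (n+1) h, ← List.getD_eq_getElem _ 0 h]
          omega
        · rw [List.getD_eq_default _ _ (by omega)]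
      have hne : π (pq + d + 1) ≠ π (pq + d + 1 + 1) :=
        fun h => by have := extPerm_inj hext _ _ (by omega) (by omega) h; omega
      have hih := ih (by omega)
      exact no_fall_in_run hn hext hq1 hq (pq + d + 1) (by omega) (by omega)
        ⟨by simpa using hih, by omega⟩
  intro j hj1 hj2
  have := key (j - pq) (by omega)
  rw [show pq + (j - pq) = j by omega] at this
  exact this

/-- values increase along the run. -/
lemma run_mono (hn : 1 ≤ n) (hext : IsExtPerm n π) {q : ℕ}
    (hq1 : 1 ≤ q) (hq : q ≤ (dellPosList n π).length) :
    ∀ j j', vPos n π q ≤ j → j ≤ j' → j' ≤ yPos n π q → π j ≤ π j' := by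
  intro j j' hj hjj' hj'
  induction j' with
  | zero => rw [show j = 0 by omega]
  | succ j' ih =>
    rcases eq_or_lt_of_le hjj' with rfl | hlt
    · exact le_refl _
    · have h1 : π j ≤ π j' := ih (by omega) (by omega)
      have h2 : π j' < π (j'+1) := run_asc hn hext hq1 hq j' (by omega) (by omega)
      omega

end M4
section M5

def seg (π : ℕ → ℕ) (lo len : ℕ) : List ℕ := (List.range len).map (fun k => π (lo + k))

lemma seg_append (π : ℕ → ℕ) (lo l1 l2 : ℕ) :
    seg π lo (l1 + l2) = seg π lo l1 ++ seg π (lo + l1) l2 := by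
  unfold seg
  rw [List.range_add, List.map_append, List.map_map]
  congr 1
  apply List.map_congr_left
  intro k _
  show π (lo + (l1 + k)) = π (lo + l1 + k)
  rw [add_assoc]

lemma seg_one (π : ℕ → ℕ) (lo : ℕ) : seg π lo 1 = [π lo] := by
  unfold seg
  rw [show List.range 1 = [0] from rfl]
  simp

lemma toList_eq_seg (n : ℕ) (p : ℕ → ℕ) : toList n p = seg p 1 n := by
  unfold toList seg
  apply List.map_congr_left
  intro k _
  rw [Nat.add_comm]

lemma seg_congr {p p' : ℕ → ℕ} {lo len : ℕ} (h : ∀ j, lo ≤ j → j < lo + len → p j = p' j) :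
    seg p lo len = seg p' lo len := by
  unfold seg
  apply List.map_congr_left
  intro k hk
  rw [List.mem_range] at hk
  exact h (lo + k) (by omega) (by omega)

variable {n : ℕ} {π : ℕ → ℕ}

/-- Values of the composite double reversal: the element at `pu` is moved to
position `b`, everything in between shifts left by one. -/
lemma tau_val (hext : IsExtPerm n π) {pu b : ℕ} (h2 : pu < b) :
    (∀ j, j < pu ∨ b < j → rev (rev π (pu+1) b) pu b j = π j) ∧
    (∀ j, pu ≤ j → j ≤ b - 1 → rev (rev π (pu+1) b) pu b j = π (j+1)) ∧
    rev (rev π (pu+1) b) pu b b = π pu := by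
  refine ⟨?_, ?_, ?_⟩
  · intro j hj
    rw [rev_out _ (by omega), rev_out _ (by omega)]
  · intro j hj1 hj2
    rw [rev_in _ (by omega) (by omega), rev_in _ (by omega) (by omega)]
    congr 1
    omega
  · rw [rev_in _ (by omega) (by omega), show pu + b - b = pu by omega,
      rev_out _ (by omega)]

/-- The list-level description of the double reversal. -/
lemma move_block (hext : IsExtPerm n π) {pu b : ℕ} (h1 : 1 ≤ pu) (h2 : pu < b) (h3 : b ≤ n) :
    ∃ l₁ l₂ : List ℕ,
      (toList n π).erase (π pu) = l₁ ++ π b :: l₂ ∧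
      toList n (rev (rev π (pu+1) b) pu b) = l₁ ++ π b :: π pu :: l₂ := by
  obtain ⟨T1, T2, T3⟩ := tau_val hext h2
  set τ := rev (rev π (pu+1) b) pu b with hτ
  have inj := extPerm_inj hext
  refine ⟨seg π 1 (pu-1) ++ seg π (pu+1) (b-pu-1), seg π (b+1) (n-b), ?_, ?_⟩
  · -- erase computation
    have hsplit : seg π 1 n
        = seg π 1 (pu-1) ++ (seg π pu 1 ++ (seg π (pu+1) (b-pu-1) ++ (seg π b 1 ++ seg π (b+1) (n-b)))) := by
      conv_lhs => rw [show n = (pu-1) + (1 + ((b-pu-1) + (1 + (n-b)))) by omega]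
      rw [seg_append, seg_append, seg_append, seg_append]
      rw [show 1 + (pu-1) = pu by omega, show pu + 1 + (b-pu-1) = b by omega]
    have hnotmem : π pu ∉ seg π 1 (pu-1) := by
      intro hmem
      unfold seg at hmem
      rw [List.mem_map] at hmem
      obtain ⟨k, hk, hv⟩ := hmem
      rw [List.mem_range] at hk
      have := inj (1+k) pu (by omega) (by omega) hv
      omega
    rw [toList_eq_seg, hsplit, seg_one, seg_one]
    rw [List.erase_append_right _ hnotmem]
    simp only [List.singleton_append, List.erase_cons_head]
    rw [List.append_assoc]
  · -- toList of τ
    have hsplit : seg τ 1 n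
        = seg τ 1 (pu-1) ++ (seg τ pu (b-pu) ++ (seg τ b 1 ++ seg τ (b+1) (n-b))) := by
      conv_lhs => rw [show n = (pu-1) + ((b-pu) + (1 + (n-b))) by omega]
      rw [seg_append, seg_append, seg_append]
      rw [show 1 + (pu-1) = pu by omega, show pu + (b - pu) = b by omega]
    have e1 : seg τ 1 (pu-1) = seg π 1 (pu-1) := seg_congr (fun j hj1 hj2 => T1 j (by omega))
    have e2 : seg τ pu (b-pu) = seg π (pu+1) (b-pu) := by
      unfold seg
      apply List.map_congr_left
      intro k hk
      rw [List.mem_range] at hk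
      rw [T2 (pu + k) (by omega) (by omega)]
      congr 1
      omega
    have e3 : seg τ (b+1) (n-b) = seg π (b+1) (n-b) := seg_congr (fun j hj1 hj2 => T1 j (by omega))
    have e4 : seg π (pu+1) (b-pu) = seg π (pu+1) (b-pu-1) ++ [π b] := by
      obtain ⟨c, hc⟩ : ∃ c, b - pu = c + 1 := ⟨b - pu - 1, by omega⟩
      rw [hc, show c + 1 - 1 = c by omega, seg_append, seg_one, show pu + 1 + c = b by omega]
    rw [toList_eq_seg, hsplit, e1, e2, e3, e4, seg_one, T3]
    simp
end M5
section M6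
variable {n : ℕ} {π : ℕ → ℕ}

lemma dell_structure_case2 (hn : 1 ≤ n) (hext : IsExtPerm n π) {q pu : ℕ}
    (hq1 : 1 ≤ q) (hq : q ≤ (dellPosList n π).length)
    (hpu1 : 1 ≤ pu)
    (hlt : pu + 1 < vPos n π q)
    (hdv1 : π (pu+1) < π pu) (hdv2 : π (pu+1) < π (pu+1+1))
    (hprec : π pu < π (pu - 1))
    (hu : π pu < π (vPos n π q)) :
    vVal n (rev (rev π (pu+1) (vPos n π q)) pu (vPos n π q)) q = π pu := by
  set pq := vPos n π q with hpq
  obtain ⟨T1, T2, T3⟩ := tau_val hext (show pu < pq by omega)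
  set τ := rev (rev π (pu+1) pq) pu pq with hτ
  have hmemq : pq ∈ dellPosList n π := getD_mem (by omega)
  have hdellq := mem_dellPosList.1 hmemq
  have hq2 : π pq < π (pq - 1) := hdellq.2.1
  have hq3 : π pq < π (pq + 1) := hdellq.2.2
  -- dell finsets
  set D : Finset ℕ := (Finset.Icc 1 n).filter (fun i => π i < π (i-1) ∧ π i < π (i+1)) with hD
  set D' : Finset ℕ := (Finset.Icc 1 n).filter (fun i => τ i < τ (i-1) ∧ τ i < τ (i+1)) with hD'
  have hDsort : dellPosList n π = D.sort (· ≤ ·) := rfl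
  have hD'sort : dellPosList n τ = D'.sort (· ≤ ·) := rfl
  -- pq is a dell of τ with value π pu
  have hτpq1 : τ (pq - 1) = π pq := by
    rw [T2 (pq - 1) (by omega) (by omega)]; congr 1; omega
  have hτpq : τ pq = π pu := T3
  have hτpq2 : τ (pq + 1) = π (pq + 1) := T1 _ (by omega)
  have hpqD' : pq ∈ D' := by
    rw [hD', Finset.mem_filter, Finset.mem_Icc]
    exact ⟨⟨by omega, hdellq.1.2⟩, by rw [hτpq1, hτpq, hτpq2]; omega⟩
  -- count of dells of π strictly before pq
  have hcountπ : (D.filter (fun y => y < pq)).card = q - 1 := by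
    rw [card_filter_lt_eq, ← hDsort]
    exact sorted_filter_of_getD (dell_sorted n π) (by omega)
  -- pointwise equivalences
  have E1 : ∀ j, 1 ≤ j → j + 2 ≤ pu → ((τ j < τ (j-1) ∧ τ j < τ (j+1)) ↔ (π j < π (j-1) ∧ π j < π (j+1))) := by
    intro j h1 h2
    rw [T1 j (by omega), T1 (j-1) (by omega), T1 (j+1) (by omega)]
  have E3 : ∀ j, pu ≤ j → j + 2 ≤ pq → ((τ j < τ (j-1) ∧ τ j < τ (j+1)) ↔ (π (j+1) < π j ∧ π (j+1) < π (j+2))) := by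
    intro j h1 h2
    rw [T2 j (by omega) (by omega), T2 (j+1) (by omega) (by omega)]
    rcases eq_or_lt_of_le h1 with hpj | h1'
    · rw [T1 (j-1) (by omega)]
      have a1 : π (j+1) < π j := by rw [← hpj]; exact hdv1
      have a2 : π j < π (j-1) := by rw [← hpj]; exact hprec
      have e : π (j+1+1) = π (j+2) := by rw [show j+1+1 = j+2 by omega]
      omega
    · rw [T2 (j-1) (by omega) (by omega), show j - 1 + 1 = j by omega,
        show j + 1 + 1 = j + 2 by omega]
  -- membership characterizations
  have memD : ∀ t, (t ∈ Finset.filter (fun y => y < pq) D) ↔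
      (((1 ≤ t ∧ t ≤ n) ∧ (π t < π (t-1) ∧ π t < π (t+1))) ∧ t < pq) := by
    intro t
    simp only [hD, Finset.mem_filter, Finset.mem_Icc, and_assoc]
  have memD' : ∀ t, (t ∈ Finset.filter (fun y => y < pq) D') ↔
      (((1 ≤ t ∧ t ≤ n) ∧ (τ t < τ (t-1) ∧ τ t < τ (t+1))) ∧ t < pq) := by
    intro t
    simp only [hD', Finset.mem_filter, Finset.mem_Icc, and_assoc]
  -- impossible dell positions of π near pu
  have notdellπ : ∀ r, r ∈ Finset.filter (fun y => y < pq) D → r ≠ pu ∧ r ≠ pu - 1 := by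
    intro r hr
    obtain ⟨⟨⟨hr1, hr2⟩, hd1, hd2⟩, hrpq⟩ := (memD r).1 hr
    constructor
    · rintro rfl; omega
    · rintro rfl
      rw [show pu - 1 + 1 = pu by omega] at hd2
      omega
  -- impossible dell positions of τ near pu and pq
  have notdellτ : ∀ s, s ∈ Finset.filter (fun y => y < pq) D' → s ≠ pu - 1 ∧ s ≠ pq - 1 := by
    intro s hs
    obtain ⟨⟨⟨hs1, hs2⟩, hd1, hd2⟩, hspq⟩ := (memD' s).1 hs
    constructor
    · rintro rfl
      rcases eq_or_lt_of_le hpu1 with h | h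
      · rw [show pu - 1 + 1 = pu by omega, T2 pu (le_refl pu) (by omega)] at hd2
        rw [show pu - 1 = 0 by omega] at hd2
        rw [T1 0 (by omega)] at hd2
        have h0 : π 0 = n + 1 := hext.2.1
        have h1' := extPerm_val hext (show 1 ≤ pu + 1 by omega) (show pu + 1 ≤ n by omega)
        omega
      · rw [show pu - 1 + 1 = pu by omega, T2 pu (le_refl pu) (by omega),
          T1 (pu - 1) (by omega)] at hd2
        omega
    · rintro rfl
      rw [show pq - 1 + 1 = pq by omega, hτpq, hτpq1] at hd2
      omega
  -- the count of dells of τ strictly before pq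
  have hcountτ : (D'.filter (fun y => y < pq)).card = q - 1 := by
    rw [← hcountπ]
    apply Finset.card_bij (i := fun s _ => if s ≤ pu - 2 then s else s + 1)
    · -- maps into the dells of π
      intro s hs
      have hne := notdellτ s hs
      obtain ⟨⟨⟨hs1, hs2⟩, hd1, hd2⟩, hspq⟩ := (memD' s).1 hs
      rw [memD]
      by_cases hc : s ≤ pu - 2
      · rw [if_pos hc]
        exact ⟨⟨⟨hs1, hs2⟩, (E1 s hs1 (by omega)).1 ⟨hd1, hd2⟩⟩, by omega⟩
      · rw [if_neg hc]
        have h1 : pu ≤ s := by omega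
        have h2 : s + 2 ≤ pq := by omega
        have hE := (E3 s h1 h2).1 ⟨hd1, hd2⟩
        refine ⟨⟨⟨by omega, by omega⟩, ?_⟩, by omega⟩
        rw [show s + 1 - 1 = s by omega]
        exact ⟨hE.1, by rw [show s + 1 + 1 = s + 2 by omega]; exact hE.2⟩
    · -- injective
      intro s1 hs1 s2 hs2 hss
      split_ifs at hss <;> omega
    · -- surjective
      intro r hr
      have hne := notdellπ r hr
      obtain ⟨⟨⟨hr1, hr2⟩, hd1, hd2⟩, hrpq⟩ := (memD r).1 hr
      by_cases hc : r ≤ pu - 2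
      · refine ⟨r, ?_, by rw [if_pos hc]⟩
        rw [memD']
        exact ⟨⟨⟨hr1, hr2⟩, (E1 r hr1 (by omega)).2 ⟨hd1, hd2⟩⟩, by omega⟩
      · have hrge : pu + 1 ≤ r := by omega
        refine ⟨r - 1, ?_, by rw [if_neg (by omega)]; omega⟩
        rw [memD']
        have h1 : pu ≤ r - 1 := by omega
        have h2 : r - 1 + 2 ≤ pq := by omega
        refine ⟨⟨⟨by omega, by omega⟩, (E3 (r-1) h1 h2).2 ?_⟩, by omega⟩
        rw [show r - 1 + 1 = r by omega, show r - 1 + 2 = r + 1 by omega]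
        exact ⟨hd1, hd2⟩
  -- conclude : pq is the q-th dell of τ
  have hmemτ : pq ∈ dellPosList n τ := by
    rw [hD'sort, Finset.mem_sort]
    exact hpqD'
  have hlen : ((dellPosList n τ).filter (fun y => y < pq)).length = q - 1 := by
    rw [hD'sort, ← card_filter_lt_eq]
    exact hcountτ
  have := sorted_getD_eq ((Finset.sortedLT_sort D').pairwise) (hD'sort ▸ hmemτ)
  rw [← hD'sort, hlen] at this
  show τ (vPos n τ q) = π pu
  unfold vPos
  rw [this]
  exact T3
end M6
section M7
variable {n : ℕ} {π : ℕ → ℕ}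

lemma yPos_le (hq1 : 1 ≤ q) : yPos n π q ≤ n + 1 := by
  unfold yPos
  rw [if_neg (by omega)]
  by_cases h : q - 1 < (pinPosList n π).length
  · have := mem_pinPosList.1 (getD_mem (l := pinPosList n π) h)
    rw [List.getD_eq_getElem _ (n+1) h, ← List.getD_eq_getElem _ 0 h]
    omega
  · rw [List.getD_eq_default _ _ (by omega)]

lemma vPos_lt_yPos (hn : 1 ≤ n) (hext : IsExtPerm n π) {q : ℕ}
    (hq1 : 1 ≤ q) (hq : q ≤ (dellPosList n π).length) :
    vPos n π q < yPos n π q := by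
  set pq := vPos n π q with hpq
  have hmemq : pq ∈ dellPosList n π := getD_mem (by omega)
  have hdellq := mem_dellPosList.1 hmemq
  by_cases h : q - 1 < (pinPosList n π).length
  · have hy0 : yPos n π q = (pinPosList n π).getD (q-1) 0 := by
      unfold yPos
      rw [if_neg (by omega), List.getD_eq_getElem _ (n+1) h, ← List.getD_eq_getElem _ 0 h]
    by_contra hcon
    push_neg at hcon
    set f0 := yPos n π q with hf0
    have hmemf : f0 ∈ pinPosList n π := by rw [hy0]; exact getD_mem h
    have hpinf := mem_pinPosList.1 hmemf
    have hcnt : ((pinPosList n π).filter (fun y => y < f0)).length = q - 1 := by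
      rw [hy0]
      exact sorted_filter_of_getD (pin_sorted n π) h
    set T : Finset ℕ := (Finset.Icc 1 n).filter (fun i => π (i-1) < π i ∧ π (i+1) < π i) with hT
    have hcard : (T.filter (fun y => y < f0)).card = q - 1 := by
      rw [card_filter_lt_eq]
      exact hcnt
    have hsub : insert f0 (T.filter (fun y => y < f0))
        ⊆ (Finset.Icc 1 pq).filter (fun i => π (i-1) < π i ∧ π (i+1) < π i) := by
      intro t ht
      rcases Finset.mem_insert.1 ht with rfl | ht'
      · rw [Finset.mem_filter, Finset.mem_Icc]
        exact ⟨⟨hpinf.1.1, hcon⟩, hpinf.2⟩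
      · rw [Finset.mem_filter] at ht'
        rw [hT, Finset.mem_filter, Finset.mem_Icc] at ht'
        obtain ⟨⟨⟨t1, t2⟩, tp⟩, tlt⟩ := ht'
        rw [Finset.mem_filter, Finset.mem_Icc]
        exact ⟨⟨t1, by omega⟩, tp⟩
    have hins : (insert f0 (T.filter (fun y => y < f0))).card = q := by
      rw [Finset.card_insert_of_notMem (by simp), hcard]
      omega
    have := Finset.card_le_card hsub
    rw [hins, falls_before_dell hn hext hq1 hq] at this
    omega
  · have : yPos n π q = n + 1 := by
      unfold yPos
      rw [if_neg (by omega), List.getD_eq_default _ _ (by omega)]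
    rw [this]
    omega

lemma cutA_eq (hn : 1 ≤ n) (hext : IsExtPerm n π) {q z : ℕ}
    (hq1 : 1 ≤ q) (hq : q ≤ (dellPosList n π).length)
    (hz1 : π (vPos n π q) < z) :
    ∃ m, vPos n π q ≤ m ∧ m < yPos n π q ∧ π m < z ∧ cutA n π q z = π m ∧
      (m + 1 = yPos n π q ∨ (m + 1 < yPos n π q ∧ ¬ π (m+1) < z)) := by
  set pq := vPos n π q with hpq
  set yq := yPos n π q with hyq
  have hpy : pq < yq := vPos_lt_yPos hn hext hq1 hq
  set P : ℕ → Prop := fun j => pq ≤ j ∧ j < yq ∧ π j < z with hP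
  have hPdec : DecidablePred P := fun _ => by rw [hP]; infer_instance
  set m := Nat.findGreatest P yq with hm
  have hPpq : P pq := ⟨le_refl _, hpy, hz1⟩
  have hPm : P m := Nat.findGreatest_spec (le_of_lt hpy) hPpq
  have hge : pq ≤ m := le_trans (le_refl _) (Nat.le_findGreatest (le_of_lt hpy) hPpq)
  refine ⟨m, hPm.1, hPm.2.1, hPm.2.2, ?_, ?_⟩
  · -- sSup computation
    unfold cutA
    apply IsGreatest.csSup_eq
    constructor
    · -- π m belongs
      constructor
      · rcases eq_or_lt_of_le hge with h | h
        · rw [← h]; exact Set.mem_insert _ _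
        · exact Set.mem_insert_iff.2 (Or.inr ⟨m, ⟨h, hPm.2.1⟩, rfl⟩)
      · exact hPm.2.2
    · -- upper bound
      rintro x ⟨hx1, hx2⟩
      rw [Set.mem_Iio] at hx2
      have : ∃ j, pq ≤ j ∧ j < yq ∧ π j = x := by
        rcases Set.mem_insert_iff.1 hx1 with h | ⟨j, ⟨hj1, hj2⟩, hj3⟩
        · exact ⟨pq, le_refl _, hpy, h.symm⟩
        · exact ⟨j, le_of_lt hj1, hj2, hj3⟩
      obtain ⟨j, hj1, hj2, hj3⟩ := this
      rcases le_or_gt j m with hjm | hjm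
      · rw [← hj3]
        exact run_mono hn hext hq1 hq j m hj1 hjm (le_of_lt hPm.2.1)
      · exfalso
        have hng := Nat.findGreatest_is_greatest hjm (le_of_lt hj2)
        simp only [hP] at hng
        push_neg at hng
        have := hng hj1 hj2
        omega
  · rcases eq_or_lt_of_le (show m + 1 ≤ yq by omega) with h | h
    · exact Or.inl h
    · right
      refine ⟨h, ?_⟩
      have hng := Nat.findGreatest_is_greatest (show m < m + 1 by omega) (by omega)
      simp only [hP] at hng
      push_neg at hng
      have := hng (by omega) h
      omega
end M7

/-- Lemma 4.4. Assume `v_i ≤ v_q` with `i ≤ q`, and that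
`u = Prec π v_i` is not a pinnacle and satisfies `y_0 ≠ u < y_q`. Then two
balanced reversals transform `π` into `π''` whose only difference with `π` is:
(i) if `u > v_q`, `u` is moved immediately after `cutA_π(u, v_q, y_q)` — so that
`u` lies in the ascending set `A_{π''}(v_q, y_q)`;
(ii) if `u < v_q`, `u` is moved immediately after `v_q` and becomes the dell
`v''_q` of `π''`. -/
theorem statement15 (n : ℕ) (π : ℕ → ℕ) (hπ : IsExtPerm n π)
    (i q : ℕ) (hi : 1 ≤ i) (hiq : i ≤ q) (hq : q ≤ (dellPosList n π).length)
    (hvv : vVal n π i ≤ vVal n π q)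
    (u : ℕ) (hu : u = π (vPos n π i - 1))
    (hupin : u ∉ pinFinset n π)
    (huy0 : u ≠ n + 1)
    (huyq : u < yVal n π q) :
    ∃ L : List (ℕ × ℕ), IsBalancedSeq n π L ∧ L.length = 2 ∧
      (vVal n π q < u →
        (∃ l₁ l₂, (toList n π).erase u = l₁ ++ cutA n π q u :: l₂ ∧
          toList n (applySeq π L) = l₁ ++ cutA n π q u :: u :: l₂) ∧
        ∃ c, 1 ≤ c ∧ c ≤ n ∧ applySeq π L c = u ∧ AscAt (applySeq π L) c) ∧
      (u < vVal n π q →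
        (∃ l₁ l₂, (toList n π).erase u = l₁ ++ vVal n π q :: l₂ ∧
          toList n (applySeq π L) = l₁ ++ vVal n π q :: u :: l₂) ∧
        vVal n (applySeq π L) q = u) := by
  subst hu
  have inj := extPerm_inj hπ
  have hq1 : 1 ≤ q := le_trans hi hiq
  have hqi : i ≤ (dellPosList n π).length := le_trans hiq hq
  set pv := vPos n π i with hpv_def
  set pq := vPos n π q with hpq_def
  have hmemi : pv ∈ dellPosList n π := getD_mem (by omega)
  have hmemq : pq ∈ dellPosList n π := getD_mem (by omega)
  have hdi := mem_dellPosList.1 hmemi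
  have hdq := mem_dellPosList.1 hmemq
  have hn : 1 ≤ n := le_trans hdi.1.1 hdi.1.2
  -- pv ≥ 2
  have hpv2 : 2 ≤ pv := by
    by_contra hcon
    have hpv1 : pv = 1 := by omega
    rw [hpv1] at huy0
    simp only [show (1:ℕ) - 1 = 0 from rfl] at huy0
    exact huy0 hπ.2.1
  set pu := pv - 1 with hpu_def
  have hpu1 : 1 ≤ pu := by omega
  have hpvpu : pv = pu + 1 := by omega
  -- basic order facts
  have hvv' : π pv ≤ π pq := hvv
  have huyq' : π pu < π (yPos n π q) := huyq
  have hpvpq : pv ≤ pq :=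
    sorted_getD_mono (dell_sorted n π) (show i - 1 ≤ q - 1 by omega) (by omega)
  have hvi_lt_u : π pv < π pu := hdi.2.1
  have hvi_asc : π pv < π (pv + 1) := hdi.2.2
  have hq2 : π pq < π (pq - 1) := hdq.2.1
  have hq3 : π pq < π (pq + 1) := hdq.2.2
  -- u is not a pinnacle: its predecessor is larger
  have hprec : π pu < π (pu - 1) := by
    have hne : π (pu - 1) ≠ π pu := fun h => by
      have := inj (pu-1) pu (by omega) (by omega) h
      omega
    by_contra hcon
    apply hupin
    unfold pinFinset
    rw [Finset.mem_image]
    refine ⟨pu, Finset.mem_filter.2 ⟨Finset.mem_Icc.2 ⟨by omega, by omega⟩, ?_, ?_⟩, rfl⟩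
    · omega
    · rw [show pu + 1 = pv by omega]
      exact hvi_lt_u
  have hune : π pu ≠ π pq := fun h => by
    have := inj pu pq (by omega) (by omega) h
    omega
  rcases lt_or_gt_of_ne hune with hcase | hcase
  · -- CASE (ii) : u < v_q ; move u right after v_q
    have hpvnepq : pv ≠ pq := fun h => by rw [h] at hvi_lt_u; omega
    have hpvltpq : pv < pq := by omega
    refine ⟨[(pu+1, pq), (pu, pq)], ?_, rfl, ?_, ?_⟩
    · -- balancedness
      show 1 ≤ pu+1 ∧ pu+1 ≤ pq ∧ pq ≤ n ∧ BalancedRev n π (pu+1) pq ∧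
        (1 ≤ pu ∧ pu ≤ pq ∧ pq ≤ n ∧ BalancedRev n (rev π (pu+1) pq) pu pq ∧ True)
      refine ⟨by omega, by omega, by omega, ?_, by omega, by omega, by omega, ?_, trivial⟩
      · -- first reversal
        apply revBalanced (n := n) (π := π) (by omega) (by omega) (by omega)
        · rw [show pu + 1 - 1 = pu by omega, show pu + 1 = pv by omega]
          exact hvi_lt_u
        · rw [show pu + 1 = pv by omega]; omega
        · exact hq3
        · right; exact hq2
        · right; right
          rw [show pu + 1 - 1 = pu by omega, show pu + 1 - 2 = pu - 1 by omega]
          exact hprec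
      · -- second reversal
        set σ := rev π (pu+1) pq with hσ
        have e1 : σ pu = π pu := rev_out π (by omega)
        have e2 : σ (pu - 1) = π (pu - 1) := rev_out π (by omega)
        have e3 : σ pq = π (pu + 1) := by
          rw [hσ, rev_in π (by omega) (by omega)]; congr 1; omega
        have e4 : σ (pq + 1) = π (pq + 1) := rev_out π (by omega)
        have epv : π (pu + 1) = π pv := by rw [show pu + 1 = pv by omega]
        apply revBalanced _ _ (by omega) (by omega) (by omega)
        · rw [e1, e2]; exact hprec
        · rw [e1, e4]; omega
        · rw [e3, e4]; omega
        · left; rw [e3, e2]; omega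
        · left; rw [e3, e2]; omega
    · -- first implication vacuous
      intro hcon
      exfalso
      have : π pq < π pu := hcon
      omega
    · intro _
      have happ : applySeq π [(pu+1, pq), (pu, pq)] = rev (rev π (pu+1) pq) pu pq := rfl
      constructor
      · obtain ⟨l₁, l₂, e1, e2⟩ := move_block hπ hpu1 (show pu < pq by omega) (by omega)
        exact ⟨l₁, l₂, e1, by rw [happ]; exact e2⟩
      · rw [happ]
        exact dell_structure_case2 hn hπ hq1 hq hpu1 (by omega)
          (by rw [show pu + 1 = pv by omega]; exact hvi_lt_u)
          (by rw [show pu + 1 = pv by omega]; exact hvi_asc)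
          hprec hcase
  · -- CASE (i) : v_q < u ; move u right after cutA
    obtain ⟨m, hm1, hm2, hm3, hm4, hm5⟩ := cutA_eq hn hπ hq1 hq hcase
    have hyle : yPos n π q ≤ n + 1 := yPos_le hq1
    have hmn : m ≤ n := by omega
    have hpum : pu < m := by omega
    have hmasc : π m < π (m+1) := run_asc hn hπ hq1 hq m hm1 hm2
    have hm1' : π pu < π (m+1) := by
      rcases hm5 with h | ⟨h1, h2⟩
      · rw [h]; exact huyq'
      · have hne : π (m+1) ≠ π pu := fun h => by
          have := inj (m+1) pu (by omega) (by omega) h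
          omega
        omega
    refine ⟨[(pu+1, m), (pu, m)], ?_, rfl, ?_, ?_⟩
    · show 1 ≤ pu+1 ∧ pu+1 ≤ m ∧ m ≤ n ∧ BalancedRev n π (pu+1) m ∧
        (1 ≤ pu ∧ pu ≤ m ∧ m ≤ n ∧ BalancedRev n (rev π (pu+1) m) pu m ∧ True)
      refine ⟨by omega, by omega, by omega, ?_, by omega, by omega, by omega, ?_, trivial⟩
      · apply revBalanced _ _ (by omega) (by omega) (by omega)
        · rw [show pu + 1 - 1 = pu by omega, show pu + 1 = pv by omega]
          exact hvi_lt_u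
        · rw [show pu + 1 = pv by omega]; omega
        · exact hmasc
        · left; rw [show pu + 1 - 1 = pu by omega]; exact hm3
        · left; rw [show pu + 1 - 1 = pu by omega]; exact hm3
      · set σ := rev π (pu+1) m with hσ
        have e1 : σ pu = π pu := rev_out π (by omega)
        have e2 : σ (pu - 1) = π (pu - 1) := rev_out π (by omega)
        have e3 : σ m = π (pu + 1) := by
          rw [hσ, rev_in π (by omega) (by omega)]; congr 1; omega
        have e4 : σ (m + 1) = π (m + 1) := rev_out π (by omega)
        have epv : π (pu + 1) = π pv := by rw [show pu + 1 = pv by omega]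
        apply revBalanced _ _ (by omega) (by omega) (by omega)
        · rw [e1, e2]; exact hprec
        · rw [e1, e4]; omega
        · rw [e3, e4]; omega
        · left; rw [e3, e2]; omega
        · left; rw [e3, e2]; omega
    · intro _
      have happ : applySeq π [(pu+1, m), (pu, m)] = rev (rev π (pu+1) m) pu m := rfl
      obtain ⟨T1, T2, T3⟩ := tau_val hπ hpum
      constructor
      · obtain ⟨l₁, l₂, e1, e2⟩ := move_block hπ hpu1 hpum hmn
        refine ⟨l₁, l₂, ?_, ?_⟩
        · show (toList n π).erase (π pu) = l₁ ++ cutA n π q (π pu) :: l₂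
          rw [hm4]; exact e1
        · show toList n (applySeq π [(pu+1, m), (pu, m)]) = l₁ ++ cutA n π q (π pu) :: π pu :: l₂
          rw [hm4, happ]; exact e2
      · refine ⟨m, by omega, hmn, ?_, ?_⟩
        · rw [happ]; exact T3
        · unfold AscAt
          rw [happ, T3, T1 (m+1) (by omega)]
          have e5 : rev (rev π (pu+1) m) pu m (m - 1) = π m := by
            rw [T2 (m-1) (by omega) (by omega)]; congr 1; omega
          rw [e5]
          exact ⟨hm3, hm1'⟩
    · intro hcon
      exfalso
      have : π pu < π pq := hcon
      omega
end

section
/- If S is the pinnacle set of some permutation π ∈ S_n (in particular n > 2|S|), then the canonical permutation Id_S ∈ S_n has pinnacle set exactly S. -/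
lemma filter_length_get {l : List ℕ} (h : l.Pairwise (· < ·)) (m : ℕ) (hm : m < l.length) :
    (l.filter (fun a => a < l.get ⟨m, hm⟩)).length = m := by
  induction l generalizing m with
  | nil => simp at hm
  | cons a t ih =>
    have ha : ∀ b ∈ t, a < b := fun b hb => List.rel_of_pairwise_cons h hb
    rcases m with _ | m
    · have : ∀ b ∈ a :: t, ¬ ((fun a' => decide (a' < (a :: t).get ⟨0, hm⟩)) b = true) := by
        intro b hb
        simp only [List.get, decide_eq_true_eq]
        rcases List.mem_cons.mp hb with rfl | hb
        · omega
        · exact fun hlt => absurd (ha b hb) (by omega)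
      have := List.filter_eq_nil_iff.mpr this
      simp only [this, List.length_nil]
    · have hm' : m < t.length := by simpa using hm
      have hget : (a :: t).get ⟨m+1, hm⟩ = t.get ⟨m, hm'⟩ := rfl
      rw [hget, List.filter_cons]
      have hat : a < t.get ⟨m, hm'⟩ := ha _ (List.get_mem t ⟨m, hm'⟩)
      rw [if_pos (by simpa using hat), List.length_cons, ih h.of_cons m hm']

lemma filter_length_le {l : List ℕ} (h : l.Pairwise (· < ·)) {x : ℕ} (m : ℕ) (hm : m < l.length)
    (hx : x ≤ l.get ⟨m, hm⟩) : (l.filter (fun a => a < x)).length ≤ m := by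
  induction l generalizing m with
  | nil => simp at hm
  | cons a t ih =>
    have ha : ∀ b ∈ t, a < b := fun b hb => List.rel_of_pairwise_cons h hb
    rcases m with _ | m
    · have hxa : x ≤ a := hx
      have : ∀ b ∈ a :: t, ¬ ((fun a' => decide (a' < x)) b = true) := by
        intro b hb
        simp only [decide_eq_true_eq]
        rcases List.mem_cons.mp hb with rfl | hb
        · omega
        · have := ha b hb; omega
      rw [List.filter_eq_nil_iff.mpr this]
      simp
    · have hm' : m < t.length := by simpa using hm
      have hx' : x ≤ t.get ⟨m, hm'⟩ := hx
      rw [List.filter_cons]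
      have hih := ih h.of_cons m hm' hx'
      split <;> simp <;> omega

lemma card_filter_eq_sort (s : Finset ℕ) (q : ℕ → Prop) [DecidablePred q] :
    (s.filter q).card = ((s.sort (·≤·)).filter (fun a => decide (q a))).length := by
  have h1 : (s.filter q).card = Multiset.card (Multiset.filter q s.val) := by
    rw [← Finset.filter_val]; rfl
  rw [h1, ← Finset.sort_eq s (·≤·), Multiset.filter_coe, Multiset.coe_card]

lemma sort_getD_mem {s : Finset ℕ} {m : ℕ} (hm : m < s.card) :
    (s.sort (·≤·)).getD m 0 ∈ s := by
  have hl : m < (s.sort (·≤·)).length := by rwa [Finset.length_sort]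
  rw [List.getD_eq_getElem _ _ hl]
  exact (Finset.mem_sort _).mp (List.get_mem _ ⟨m, hl⟩)

lemma sort_getD_lt_getD {s : Finset ℕ} {a b : ℕ} (hab : a < b) (hb : b < s.card) :
    (s.sort (·≤·)).getD a 0 < (s.sort (·≤·)).getD b 0 := by
  have hlb : b < (s.sort (·≤·)).length := by rwa [Finset.length_sort]
  have hla : a < (s.sort (·≤·)).length := lt_trans hab hlb
  rw [List.getD_eq_getElem _ _ hla, List.getD_eq_getElem _ _ hlb]
  exact (Finset.sortedLT_sort s).strictMono_get (by exact hab)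

lemma sort_getD_lt {s : Finset ℕ} {x m : ℕ} (hm : m < s.card)
    (hc : m + 1 ≤ (s.filter (· < x)).card) : (s.sort (·≤·)).getD m 0 < x := by
  by_contra hcon
  push_neg at hcon
  have hl : m < (s.sort (·≤·)).length := by rwa [Finset.length_sort]
  have hcon' : x ≤ (s.sort (·≤·)).get ⟨m, hl⟩ := by
    rw [List.getD_eq_getElem _ _ hl] at hcon; exact hcon
  have := filter_length_le (Finset.sortedLT_sort s).pairwise m hl hcon'
  rw [card_filter_eq_sort] at hc
  omega

lemma card_filter_lt_getD {s : Finset ℕ} {m : ℕ} (hm : m < s.card) :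
    (s.filter (· < (s.sort (·≤·)).getD m 0)).card = m := by
  have hl : m < (s.sort (·≤·)).length := by rwa [Finset.length_sort]
  rw [card_filter_eq_sort, List.getD_eq_getElem _ _ hl]
  exact filter_length_get (Finset.sortedLT_sort s).pairwise m hl

lemma pin_admissible (n : ℕ) (π : ℕ → ℕ) (hπ : IsExtPerm n π) (x : ℕ) (hx : x ∈ pinFinset n π) :
    2 * ((pinFinset n π).filter (· ≤ x)).card + 1 ≤ x := by
  obtain ⟨hbij, h0, hn1⟩ := hπ
  have hmaps : ∀ j, 1 ≤ j → j ≤ n → 1 ≤ π j ∧ π j ≤ n := by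
    intro j h1 h2
    exact Set.mem_Icc.mp (hbij.mapsTo (Set.mem_Icc.mpr ⟨h1, h2⟩))
  set P := (Finset.Icc 1 n).filter
    (fun j => (π (j-1) < π j ∧ π (j+1) < π j) ∧ π j ≤ x) with hP
  have hPim : P.image π = (pinFinset n π).filter (· ≤ x) := by
    rw [pinFinset, Finset.filter_image, Finset.filter_filter]
  have hPsub : ∀ j ∈ P, (2 ≤ j ∧ j + 1 ≤ n) ∧ π j ≤ x ∧ π (j-1) < π j ∧ π (j+1) < π j := by
    intro j hj
    rw [hP, Finset.mem_filter, Finset.mem_Icc] at hj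
    obtain ⟨⟨hj1, hjn⟩, ⟨hpl, hpr⟩, hjx⟩ := hj
    have hv := hmaps j hj1 hjn
    refine ⟨⟨?_, ?_⟩, hjx, hpl, hpr⟩
    · rcases Nat.lt_or_ge j 2 with h | h
      · have hj1' : j = 1 := by omega
        subst hj1'
        rw [show (1:ℕ) - 1 = 0 from rfl, h0] at hpl
        omega
      · exact h
    · rcases Nat.lt_or_ge j n with h | h
      · omega
      · have : j = n := le_antisymm hjn h
        subst this
        rw [hn1] at hpr; omega
  have hne : P.Nonempty := by
    rw [pinFinset] at hx
    obtain ⟨j, hj, hjx⟩ := Finset.mem_image.mp hx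
    exact ⟨j, by rw [hP, Finset.mem_filter]
                 rw [Finset.mem_filter] at hj
                 exact ⟨hj.1, hj.2, le_of_eq hjx⟩⟩
  set m := P.min' hne with hm
  have hmP : m ∈ P := P.min'_mem hne
  have hm2 : 2 ≤ m := ((hPsub m hmP).1).1
  set Q := P.image (· + 1) with hQ
  have hdisj : Disjoint P Q := by
    rw [Finset.disjoint_left]
    intro j hjP hjQ
    obtain ⟨q, hqP, rfl⟩ := Finset.mem_image.mp hjQ
    have h1 := hPsub _ hjP
    have h2 := hPsub _ hqP
    have he : q + 1 - 1 = q := by omega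
    rw [he] at h1
    omega
  have hm1 : m - 1 ∉ P ∪ Q := by
    intro h
    rcases Finset.mem_union.mp h with h | h
    · have h1 := hPsub _ h
      have h2 := hPsub _ hmP
      have he : m - 1 + 1 = m := by omega
      rw [he] at h1
      omega
    · obtain ⟨q, hqP, hq⟩ := Finset.mem_image.mp h
      have := P.min'_le q hqP
      omega
  set M := insert (m-1) (P ∪ Q) with hM
  have hMcard : M.card = 2 * P.card + 1 := by
    rw [hM, Finset.card_insert_of_notMem hm1, Finset.card_union_of_disjoint hdisj, hQ,
      Finset.card_image_of_injective _ (add_left_injective 1)]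
    ring
  have hMfacts : ∀ j ∈ M, (1 ≤ j ∧ j ≤ n) ∧ 1 ≤ π j ∧ π j ≤ x := by
    intro j hj
    rw [hM, Finset.mem_insert, Finset.mem_union] at hj
    rcases hj with rfl | hj | hj
    · have h2 := hPsub _ hmP
      have hb : 1 ≤ m - 1 ∧ m - 1 ≤ n := by omega
      have hv := hmaps _ hb.1 hb.2
      exact ⟨hb, hv.1, le_of_lt (lt_of_lt_of_le h2.2.2.1 h2.2.1)⟩
    · have h2 := hPsub _ hj
      have hb : 1 ≤ j ∧ j ≤ n := by omega
      exact ⟨hb, (hmaps _ hb.1 hb.2).1, h2.2.1⟩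
    · obtain ⟨q, hqP, rfl⟩ := Finset.mem_image.mp hj
      have h2 := hPsub _ hqP
      have hb : 1 ≤ q + 1 ∧ q + 1 ≤ n := by omega
      exact ⟨hb, (hmaps _ hb.1 hb.2).1, le_of_lt (lt_of_lt_of_le h2.2.2.2 h2.2.1)⟩
  have hMinj : Set.InjOn π ↑M := by
    apply hbij.injOn.mono
    intro j hj
    have := (hMfacts j hj).1
    exact Set.mem_Icc.mpr this
  have hIm : M.image π ⊆ Finset.Icc 1 x := by
    intro y hy
    obtain ⟨j, hj, rfl⟩ := Finset.mem_image.mp hy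
    exact Finset.mem_Icc.mpr (hMfacts j hj).2
  have hfin : 2 * P.card + 1 ≤ x := by
    have h1 : (M.image π).card = M.card := Finset.card_image_of_injOn hMinj
    have h2 : (M.image π).card ≤ (Finset.Icc 1 x).card := Finset.card_le_card hIm
    rw [Nat.card_Icc] at h2
    omega
  have hPcard : ((pinFinset n π).filter (· ≤ x)).card = P.card := by
    rw [← hPim]
    exact Finset.card_image_of_injOn (hbij.injOn.mono (by
      intro j hj
      have hj' := hPsub j hj
      exact Set.mem_Icc.mpr (by omega)))
  omega

/-- `k`-th smallest element of `S` (0-indexed). -/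
def slD (S : Finset ℕ) (k : ℕ) : ℕ := (S.sort (·≤·)).getD k 0

/-- `k`-th smallest element of the complement of `S` (0-indexed). -/
def tlD (n : ℕ) (S : Finset ℕ) (k : ℕ) : ℕ := ((Finset.Icc 1 n \ S).sort (·≤·)).getD k 0

lemma slD_mem {S : Finset ℕ} {k : ℕ} (hk : k < S.card) : slD S k ∈ S := sort_getD_mem hk

lemma Tcard {n : ℕ} {S : Finset ℕ} (hSsub : S ⊆ Finset.Icc 1 n) :
    (Finset.Icc 1 n \ S).card = n - S.card := by
  rw [Finset.card_sdiff_of_subset hSsub, Nat.card_Icc]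
  omega

lemma tlD_mem {n : ℕ} {S : Finset ℕ} {k : ℕ} (hSsub : S ⊆ Finset.Icc 1 n)
    (hk : k < n - S.card) : tlD n S k ∈ Finset.Icc 1 n \ S :=
  sort_getD_mem (by rwa [Tcard hSsub])

lemma tlD_le {n : ℕ} {S : Finset ℕ} {k : ℕ} (hSsub : S ⊆ Finset.Icc 1 n)
    (hk : k < n - S.card) : tlD n S k ≤ n :=
  (Finset.mem_Icc.mp (Finset.mem_sdiff.mp (tlD_mem hSsub hk)).1).2

lemma tlD_mono {n : ℕ} {S : Finset ℕ} {a b : ℕ} (hSsub : S ⊆ Finset.Icc 1 n)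
    (hab : a < b) (hb : b < n - S.card) : tlD n S a < tlD n S b :=
  sort_getD_lt_getD hab (by rwa [Tcard hSsub])

lemma canon_zero (n : ℕ) (S : Finset ℕ) : canon n S 0 = n + 1 := by simp [canon]

lemma canon_last (n : ℕ) (S : Finset ℕ) : canon n S (n+1) = n + 2 := by simp [canon]

lemma canon_even (n : ℕ) (S : Finset ℕ) (k : ℕ) (hk1 : 1 ≤ k) (hk : k ≤ S.card)
    (hn : 2 * S.card < n) : canon n S (2*k) = slD S (k-1) := by
  have h0 : ¬ (2*k = 0) := by omega
  have h1 : ¬ (2*k = n+1) := by omega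
  have h2 : 2*k ≤ 2*S.card ∧ 2*k % 2 = 0 := ⟨by omega, by omega⟩
  show (if _ then _ else _) = _
  rw [if_neg h0, if_neg h1, if_pos h2, slD]
  congr 1
  omega

lemma canon_odd (n : ℕ) (S : Finset ℕ) (k : ℕ) (hk : k ≤ S.card)
    (hn : 2 * S.card < n) : canon n S (2*k+1) = tlD n S k := by
  have h0 : ¬ (2*k+1 = 0) := by omega
  have h1 : ¬ (2*k+1 = n+1) := by omega
  have h2 : ¬ (2*k+1 ≤ 2*S.card ∧ (2*k+1) % 2 = 0) := by omega
  show (if _ then _ else _) = _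
  rw [if_neg h0, if_neg h1, if_neg h2]
  by_cases hc : k < S.card
  · rw [if_pos (by omega : 2*k+1 ≤ 2*S.card), tlD]
    congr 1
    omega
  · rw [if_neg (by omega : ¬ (2*k+1 ≤ 2*S.card)), tlD]
    congr 1
    omega

lemma canon_tail (n : ℕ) (S : Finset ℕ) (j : ℕ) (h2 : 2*S.card < j) (hn : j ≤ n) :
    canon n S j = tlD n S (j - S.card - 1) := by
  have h0 : ¬ (j = 0) := by omega
  have h1 : ¬ (j = n+1) := by omega
  have h3 : ¬ (j ≤ 2*S.card ∧ j % 2 = 0) := by omega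
  have h4 : ¬ (j ≤ 2*S.card) := by omega
  show (if _ then _ else _) = _
  rw [if_neg h0, if_neg h1, if_neg h3, if_neg h4, tlD]

lemma key_lt (n : ℕ) (S : Finset ℕ) (hSsub : S ⊆ Finset.Icc 1 n)
    (hadm : ∀ x ∈ S, 2 * (S.filter (· ≤ x)).card + 1 ≤ x) :
    ∀ k, k < S.card → 2*k + 3 ≤ slD S k := by
  intro k hk
  have hx : slD S k ∈ S := slD_mem hk
  have h1 := hadm _ hx
  have hlt : (S.filter (· < slD S k)).card = k := card_filter_lt_getD hk
  have h2 : S.filter (· ≤ slD S k) = insert (slD S k) (S.filter (· < slD S k)) := by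
    ext a
    simp only [Finset.mem_filter, Finset.mem_insert]
    constructor
    · rintro ⟨ha, hle⟩
      rcases eq_or_lt_of_le hle with h | h
      · exact Or.inl h
      · exact Or.inr ⟨ha, h⟩
    · rintro (rfl | ⟨ha, h⟩)
      · exact ⟨hx, le_refl _⟩
      · exact ⟨ha, le_of_lt h⟩
  rw [h2, Finset.card_insert_of_notMem (by simp), hlt] at h1
  omega

lemma key_2p (n : ℕ) (S : Finset ℕ) (hSsub : S ⊆ Finset.Icc 1 n)
    (hadm : ∀ x ∈ S, 2 * (S.filter (· ≤ x)).card + 1 ≤ x) (hp : 0 < S.card) :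
    2 * S.card < n := by
  have hx : slD S (S.card - 1) ∈ S := slD_mem (by omega)
  have h1 := key_lt n S hSsub hadm (S.card - 1) (by omega)
  have h2 : slD S (S.card - 1) ≤ n := (Finset.mem_Icc.mp (hSsub hx)).2
  omega

lemma key_cmp (n : ℕ) (S : Finset ℕ) (hSsub : S ⊆ Finset.Icc 1 n)
    (hadm : ∀ x ∈ S, 2 * (S.filter (· ≤ x)).card + 1 ≤ x) :
    ∀ k, k < S.card → tlD n S (k+1) < slD S k := by
  intro k hk
  have hx : slD S k ∈ S := slD_mem hk
  have hx3 := key_lt n S hSsub hadm k hk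
  have hxn : slD S k ≤ n := (Finset.mem_Icc.mp (hSsub hx)).2
  have hSfil : (S.filter (· < slD S k)).card = k := card_filter_lt_getD hk
  have hIfil : ((Finset.Icc 1 n).filter (· < slD S k)).card = slD S k - 1 := by
    have he : (Finset.Icc 1 n).filter (· < slD S k) = Finset.Icc 1 (slD S k - 1) := by
      ext a
      simp only [Finset.mem_filter, Finset.mem_Icc]
      omega
    rw [he, Nat.card_Icc]
    omega
  have hsplit : (Finset.Icc 1 n).filter (· < slD S k)
      = S.filter (· < slD S k) ∪ (Finset.Icc 1 n \ S).filter (· < slD S k) := by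
    ext a
    simp only [Finset.mem_filter, Finset.mem_union, Finset.mem_sdiff]
    constructor
    · rintro ⟨ha, hlt⟩
      by_cases haS : a ∈ S
      · exact Or.inl ⟨haS, hlt⟩
      · exact Or.inr ⟨⟨ha, haS⟩, hlt⟩
    · rintro (⟨haS, hlt⟩ | ⟨⟨ha, _⟩, hlt⟩)
      · exact ⟨hSsub haS, hlt⟩
      · exact ⟨ha, hlt⟩
  have hdisj : Disjoint (S.filter (· < slD S k)) ((Finset.Icc 1 n \ S).filter (· < slD S k)) := by
    rw [Finset.disjoint_left]
    intro a haS haT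
    exact (Finset.mem_sdiff.mp (Finset.mem_filter.mp haT).1).2 (Finset.mem_filter.mp haS).1
  have hTfil : k + 2 ≤ ((Finset.Icc 1 n \ S).filter (· < slD S k)).card := by
    have := hsplit ▸ hIfil
    rw [Finset.card_union_of_disjoint hdisj, hSfil] at this
    omega
  have h2pn : 2 * S.card < n := key_2p n S hSsub hadm (by omega)
  exact sort_getD_lt (by rw [Tcard hSsub]; omega) hTfil

private theorem statement19_aux (n : ℕ) (π : ℕ → ℕ) (hπ : IsExtPerm n π)
    (S : Finset ℕ) (hS : S = pinFinset n π) :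
    pinFinset n (canon n S) = S := by
  classical
  have hadm : ∀ x ∈ S, 2 * (S.filter (· ≤ x)).card + 1 ≤ x := by
    intro x hxS
    rw [hS] at hxS ⊢
    exact pin_admissible n π hπ x hxS
  have hSsub : S ⊆ Finset.Icc 1 n := by
    intro x hxS
    rw [hS, pinFinset] at hxS
    obtain ⟨j, hj, rfl⟩ := Finset.mem_image.mp hxS
    rw [Finset.mem_filter, Finset.mem_Icc] at hj
    exact Finset.mem_Icc.mpr (Set.mem_Icc.mp (hπ.1.mapsTo (Set.mem_Icc.mpr hj.1)))
  clear hS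
  have hn2p : 0 < S.card → 2 * S.card < n := key_2p n S hSsub hadm
  have hmain : ∀ k, k < S.card → tlD n S (k+1) < slD S k := key_cmp n S hSsub hadm
  have hmono : ∀ a b : ℕ, a < b → b < n - S.card → tlD n S a < tlD n S b :=
    fun a b h hb => tlD_mono hSsub h hb
  have hF : (Finset.Icc 1 n).filter
        (fun i => canon n S (i-1) < canon n S i ∧ canon n S (i+1) < canon n S i)
      = (Finset.Icc 1 S.card).image (fun k => 2*k) := by
    ext i
    simp only [Finset.mem_filter, Finset.mem_image, Finset.mem_Icc]
    constructor
    · rintro ⟨⟨hi1, hin⟩, hl, hr⟩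
      by_cases hile : i ≤ 2 * S.card
      · have hp1 : 0 < S.card := by omega
        have h2pn := hn2p hp1
        by_cases hpar : i % 2 = 0
        · exact ⟨i/2, ⟨by omega, by omega⟩, by omega⟩
        · exfalso
          obtain ⟨k, rfl⟩ : ∃ k, i = 2*k+1 := ⟨i/2, by omega⟩
          have hkp : k < S.card := by omega
          rw [show 2*k+1-1 = 2*k from by omega, canon_odd n S k (by omega) h2pn] at hl
          rcases Nat.eq_zero_or_pos k with rfl | hk0
          · rw [show 2*0 = 0 from rfl, canon_zero] at hl
            have := tlD_le hSsub (show 0 < n - S.card by omega)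
            omega
          · rw [canon_even n S k (by omega) (by omega) h2pn] at hl
            have h1 := hmain (k-1) (by omega)
            rw [show k-1+1 = k from by omega] at h1
            omega
      · exfalso
        push_neg at hile
        rcases Nat.lt_or_ge i n with hlt | hge
        · rw [canon_tail n S i hile (by omega),
            canon_tail n S (i+1) (by omega) (by omega)] at hr
          have := hmono (i - S.card - 1) (i + 1 - S.card - 1) (by omega) (by omega)
          omega
        · have hieq : i = n := by omega
          rw [hieq] at hr hile
          rw [canon_last, canon_tail n S n hile (le_refl n)] at hr
          have := tlD_le hSsub (show n - S.card - 1 < n - S.card by omega)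
          omega
    · rintro ⟨k, ⟨hk1, hkp⟩, rfl⟩
      have hp1 : 0 < S.card := by omega
      have h2pn := hn2p hp1
      have h1 := hmain (k-1) (by omega)
      rw [show k-1+1 = k from by omega] at h1
      refine ⟨⟨by omega, by omega⟩, ?_, ?_⟩
      · rw [show 2*k-1 = 2*(k-1)+1 from by omega, canon_odd n S (k-1) (by omega) h2pn,
          canon_even n S k hk1 hkp h2pn]
        have h2 := hmono (k-1) k (by omega) (by omega)
        omega
      · rw [canon_even n S k hk1 hkp h2pn, canon_odd n S k (by omega) h2pn]
        exact h1
  rw [pinFinset, hF, Finset.image_image]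
  ext x
  simp only [Finset.mem_image, Finset.mem_Icc, Function.comp]
  constructor
  · rintro ⟨k, ⟨hk1, hkp⟩, rfl⟩
    rw [canon_even n S k hk1 hkp (hn2p (by omega))]
    exact slD_mem (by omega)
  · intro hxS
    have hxl : x ∈ S.sort (·≤·) := (Finset.mem_sort _).mpr hxS
    obtain ⟨⟨k, hk⟩, hget⟩ := List.mem_iff_get.mp hxl
    have hkp : k < S.card := by rwa [Finset.length_sort] at hk
    refine ⟨k+1, ⟨by omega, by omega⟩, ?_⟩
    rw [canon_even n S (k+1) (by omega) (by omega) (hn2p (by omega))]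
    rw [show k+1-1 = k from by omega, slD, List.getD_eq_getElem _ _ hk]
    exact hget

/-- If `S` is the pinnacle set of some permutation `π ∈ S_n`,
then the canonical permutation `Id_S ∈ S_n` has pinnacle set exactly `S`. -/
theorem statement19 (n : ℕ) (π : ℕ → ℕ) (hπ : IsExtPerm n π)
    (S : Finset ℕ) (hS : S = pinFinset n π) :
    pinFinset n (canon n S) = S := by
  exact statement19_aux n π hπ S hS
end
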